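/- Let (X_i, F_i)_{i=0,…,n} be martingale differences with E|X_i|^β < ∞ for a constant β ∈ (1, 2] and all 1 ≤ i ≤ n. Define G⁰_k(β) = Σ_{i=1}^k ( E[(X_i⁻)^β | F_{i−1}] + (X_i⁺)^β ) for k ∈ [1, n], where x⁺ = max{x, 0} and x⁻ = (−x)⁺. Then for all x, v > 0: P( S_k ≥ x and G⁰_k(β) ≤ v^β for some k ∈ [1, n] ) ≤ exp( −C(β) (x/v)^{β/(β−1)} ), where C(β) = β^{1/(1−β)} (1 − β^{−1}). -/

import Mathlib

open MeasureTheory Filter Set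
noncomputable section


lemma measurable_rpow_const (c : ℝ) : Measurable fun u : ℝ => u ^ c := by
  measurability

lemma aux_exp_neg_le_inv {u : ℝ} (hu : 0 ≤ u) : Real.exp (-u) ≤ (1 + u)⁻¹ := by
  have h1 : (1 : ℝ) + u ≤ Real.exp u := by
    have := Real.add_one_le_exp u; linarith
  have h2 : (0:ℝ) < 1 + u := by linarith
  rw [Real.exp_neg]
  exact inv_anti₀ h2 h1

lemma aux_sq_rpow {u : ℝ} : u ^ (2:ℝ) = u * u := by
  rw [show (2:ℝ) = (2:ℕ) by norm_num, Real.rpow_natCast]; ring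

lemma aux_rpow_sq_le {β u : ℝ} (hβ1 : 1 ≤ β) (hβ2 : β ≤ 2) (hu0 : 0 ≤ u) (hu1 : u ≤ 1) :
    u * u ≤ u ^ β := by
  rw [← aux_sq_rpow]
  rcases eq_or_lt_of_le hu0 with h | h
  · rw [← h, Real.zero_rpow (by norm_num), Real.zero_rpow (by linarith)]
  · exact Real.rpow_le_rpow_of_exponent_ge h hu1 hβ2

lemma auxB {β : ℝ} (hβ1 : 1 ≤ β) (hβ2 : β ≤ 2) {u : ℝ} (hu : 0 ≤ u) :
    Real.exp (-u) ≤ 1 - u + u ^ β := by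
  have h2 : (0:ℝ) < 1 + u := by linarith
  have key : u * u ≤ u ^ β * (1 + u) := by
    rcases le_total u 1 with h | h
    · have h0 := aux_rpow_sq_le hβ1 hβ2 hu h
      nlinarith [Real.rpow_nonneg hu β]
    · have h1 : u ^ (1:ℝ) ≤ u ^ β := Real.rpow_le_rpow_of_exponent_le h hβ1
      rw [Real.rpow_one] at h1
      nlinarith
  have main : (1 + u)⁻¹ ≤ 1 - u + u ^ β := by
    rw [inv_le_iff_one_le_mul₀ h2]
    nlinarith [key]
  exact le_trans (aux_exp_neg_le_inv hu) main

lemma auxA {β : ℝ} (hβ1 : 1 ≤ β) (hβ2 : β ≤ 2) {u : ℝ} (hu : 0 ≤ u) :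
    Real.exp (u - u ^ β) ≤ 1 + u := by
  have h2 : (0:ℝ) < 1 + u := by linarith
  rcases le_total 1 u with h | h
  · have h1 : u ^ (1:ℝ) ≤ u ^ β := Real.rpow_le_rpow_of_exponent_le h hβ1
    rw [Real.rpow_one] at h1
    calc Real.exp (u - u ^ β) ≤ Real.exp 0 := Real.exp_le_exp.2 (by linarith)
      _ = 1 := Real.exp_zero
      _ ≤ 1 + u := by linarith
  · have hsq : u * u ≤ u ^ β := aux_rpow_sq_le hβ1 hβ2 hu h
    have step1 : u - u ^ β ≤ u / (1 + u) := by
      rw [le_div_iff₀ h2]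
      nlinarith [mul_nonneg (Real.rpow_nonneg hu β) hu]
    have step2 : Real.exp (u / (1 + u)) ≤ 1 + u := by
      have hx : u / (1 + u) < 1 := by
        rw [div_lt_one h2]; linarith
      have h3 : 1 - u / (1 + u) ≤ Real.exp (-(u / (1 + u))) := by
        have := Real.add_one_le_exp (-(u / (1 + u))); linarith
      have h4 : 0 < 1 - u / (1 + u) := by linarith
      have h5 := inv_anti₀ h4 h3
      rw [Real.exp_neg, inv_inv] at h5
      have h6 : (1 - u / (1+u))⁻¹ = 1 + u := by
        field_simp
        ring
      rw [h6] at h5; exact h5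
    calc Real.exp (u - u ^ β) ≤ Real.exp (u / (1+u)) := Real.exp_le_exp.2 step1
      _ ≤ 1 + u := step2

lemma auxC {β : ℝ} (hβ1 : 1 ≤ β) (hβ2 : β ≤ 2) {l : ℝ} (hl : 0 ≤ l) (t : ℝ) :
    Real.exp (l * t - l ^ β * (max t 0) ^ β) ≤ 1 + l * t + l ^ β * (max (-t) 0) ^ β := by
  rcases le_total 0 t with h | h
  · have hmax : max t 0 = t := max_eq_left h
    have hmax' : max (-t) 0 = 0 := max_eq_right (by linarith)
    rw [hmax, hmax', Real.zero_rpow (by linarith), mul_zero, add_zero,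
      ← Real.mul_rpow hl h]
    exact auxA hβ1 hβ2 (mul_nonneg hl h)
  · have hmax : max t 0 = 0 := max_eq_right h
    have hmax' : max (-t) 0 = -t := max_eq_left (by linarith)
    rw [hmax, hmax', Real.zero_rpow (by linarith), mul_zero, sub_zero,
      ← Real.mul_rpow hl (by linarith)]
    have := auxB hβ1 hβ2 (u := l * (-t)) (mul_nonneg hl (by linarith))
    have heq : -(l * (-t)) = l * t := by ring
    rw [heq] at this
    calc Real.exp (l * t) ≤ 1 - l * (-t) + (l * (-t)) ^ β := this
      _ = 1 + l * t + (l * -t) ^ β := by ring_nf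

lemma auxD {β : ℝ} (hβ1 : 1 ≤ β) {u : ℝ} (hu : 0 ≤ u) : u - u ^ β ≤ 1 := by
  rcases le_total u 1 with h | h
  · have : 0 ≤ u ^ β := Real.rpow_nonneg hu β
    linarith
  · have h1 : u ^ (1:ℝ) ≤ u ^ β := Real.rpow_le_rpow_of_exponent_le h hβ1
    rw [Real.rpow_one] at h1; linarith

lemma key_step {Ω : Type*} [m0 : MeasurableSpace Ω] (P : Measure Ω) [IsProbabilityMeasure P]
    {m : MeasurableSpace Ω} (hm : m ≤ m0)
    {β l : ℝ} (hβ1 : 1 ≤ β) (hβ2 : β ≤ 2) (hl : 0 ≤ l)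
    {ξ : Ω → ℝ}
    (hξm : Measurable[m0] ξ) (hξint : Integrable ξ P)
    (hξmd : P[ξ|m] =ᵐ[P] 0)
    (hξmom : Integrable (fun ω => |ξ ω| ^ β) P)
    {f : Ω → ℝ} (hfm : Measurable[m] f) (hf0 : ∀ ω, 0 ≤ f ω)
    {C : ℝ} (hfC : ∀ᵐ ω ∂P, f ω ≤ C) :
    ∫ ω, f ω * Real.exp (l * ξ ω - l ^ β * (max (ξ ω) 0) ^ β
        - l ^ β * (P[fun ω' => (max (-(ξ ω')) 0) ^ β|m]) ω) ∂P ≤ ∫ ω, f ω ∂P := by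
  set E : Ω → ℝ := P[fun ω' => (max (-(ξ ω')) 0) ^ β|m] with hE_def
  set V : Ω → ℝ := fun ω => Real.exp (l * ξ ω - l ^ β * (max (ξ ω) 0) ^ β) with hV_def
  set h : Ω → ℝ := fun ω => f ω * Real.exp (-(l ^ β * E ω)) with hh_def
  have hlβ : 0 ≤ l ^ β := Real.rpow_nonneg hl β
  have hfm0 : Measurable[m0] f := hfm.mono hm le_rfl
  have hfint : Integrable f P := by
    refine Integrable.mono' (integrable_const (max C 0)) hfm0.aestronglyMeasurable ?_
    filter_upwards [hfC] with ω h1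
    rw [Real.norm_eq_abs, abs_of_nonneg (hf0 ω)]
    exact le_trans h1 (le_max_left _ _)
  have hnegm : Measurable[m0] (fun ω => (max (-(ξ ω)) 0) ^ β) := by fun_prop
  have hnegint : Integrable (fun ω => (max (-(ξ ω)) 0) ^ β) P := by
    refine Integrable.mono' hξmom ?_ ?_
    · exact hnegm.aestronglyMeasurable (μ := P)
    filter_upwards with ω
    rw [Real.norm_eq_abs, abs_of_nonneg (Real.rpow_nonneg (le_max_right _ _) β)]
    have h1 : max (-(ξ ω)) 0 ≤ |ξ ω| := max_le (neg_le_abs _) (abs_nonneg _)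
    exact Real.rpow_le_rpow (le_max_right _ _) h1 (by linarith)
  have hEsm : StronglyMeasurable[m] E := stronglyMeasurable_condExp
  have hEm : Measurable[m] E := hEsm.measurable
  have hEint : Integrable E P := integrable_condExp
  have hE0 : 0 ≤ᵐ[P] E := condExp_nonneg (Filter.Eventually.of_forall fun ω =>
    Real.rpow_nonneg (le_max_right _ _) β)
  have hVbd : ∀ ω, V ω ≤ Real.exp 1 := by
    intro ω
    apply Real.exp_le_exp.2
    have h1 : l * ξ ω ≤ l * max (ξ ω) 0 :=
      mul_le_mul_of_nonneg_left (le_max_left _ _) hl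
    have h2 : l ^ β * (max (ξ ω) 0) ^ β = (l * max (ξ ω) 0) ^ β :=
      (Real.mul_rpow hl (le_max_right _ _)).symm
    have h3 := auxD hβ1 (mul_nonneg hl (le_max_right (ξ ω) 0))
    rw [h2]; linarith
  have hV0 : ∀ ω, 0 ≤ V ω := fun ω => (Real.exp_pos _).le
  have hVm : Measurable[m0] V := by fun_prop
  have hVint : Integrable V P := by
    refine Integrable.mono' (integrable_const (Real.exp 1)) ?_ ?_
    · exact hVm.aestronglyMeasurable (μ := P)
    filter_upwards with ω
    rw [Real.norm_eq_abs, abs_of_nonneg (hV0 ω)]; exact hVbd ω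
  have hVle : ∀ ω, V ω ≤ 1 + l * ξ ω + l ^ β * (max (-(ξ ω)) 0) ^ β :=
    fun ω => auxC hβ1 hβ2 hl (ξ ω)
  have hRHSint : Integrable (fun ω => 1 + l * ξ ω + l ^ β * (max (-(ξ ω)) 0) ^ β) P :=
    ((integrable_const 1).add (hξint.const_mul l)).add (hnegint.const_mul (l ^ β))
  have hcond : P[V|m] ≤ᵐ[P] fun ω => 1 + l ^ β * E ω := by
    have h1 : P[V|m] ≤ᵐ[P] P[fun ω => 1 + l * ξ ω + l ^ β * (max (-(ξ ω)) 0) ^ β|m] :=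
      condExp_mono hVint hRHSint (Filter.Eventually.of_forall hVle)
    have h2 : P[fun ω => 1 + l * ξ ω + l ^ β * (max (-(ξ ω)) 0) ^ β|m]
        =ᵐ[P] fun ω => 1 + l ^ β * E ω := by
      have e1 : (fun ω => 1 + l * ξ ω + l ^ β * (max (-(ξ ω)) 0) ^ β)
          = (fun _ => (1 : ℝ)) + ((l • ξ) + (l ^ β • fun ω => (max (-(ξ ω)) 0) ^ β)) := by
        funext ω; simp only [Pi.add_apply, Pi.smul_apply, smul_eq_mul]; ring
      rw [e1]
      have hadd1 : P[(fun _ => (1:ℝ)) + ((l • ξ) + (l ^ β • fun ω => (max (-(ξ ω)) 0) ^ β))|m]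
          =ᵐ[P] P[fun _ => (1:ℝ)|m] + P[(l • ξ) + (l ^ β • fun ω => (max (-(ξ ω)) 0) ^ β)|m] :=
        condExp_add (integrable_const 1) ((hξint.smul l).add (hnegint.smul (l ^ β))) m
      have hadd2 : P[(l • ξ) + (l ^ β • fun ω => (max (-(ξ ω)) 0) ^ β)|m]
          =ᵐ[P] P[l • ξ|m] + P[l ^ β • fun ω => (max (-(ξ ω)) 0) ^ β|m] :=
        condExp_add (hξint.smul l) (hnegint.smul (l ^ β)) m
      have hc : P[fun _ => (1:ℝ)|m] = fun _ => (1:ℝ) := condExp_const hm 1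
      have hs1 : P[l • ξ|m] =ᵐ[P] l • P[ξ|m] := condExp_smul l ξ m
      have hs2 : P[l ^ β • fun ω => (max (-(ξ ω)) 0) ^ β|m]
          =ᵐ[P] l ^ β • E := condExp_smul (l ^ β) _ m
      filter_upwards [hadd1, hadd2, hs1, hs2, hξmd] with ω k1 k2 k3 k4 k5
      simp only [Pi.add_apply, Pi.smul_apply, smul_eq_mul, hc, Pi.zero_apply] at *
      rw [k1, k2, k3, k4, k5]
      ring
    exact h1.trans h2.le
  have hhsm : StronglyMeasurable[m] h :=
    (hfm.mul (Real.measurable_exp.comp ((measurable_const.mul hEm).neg))).stronglyMeasurable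
  have hhm0 : Measurable[m0] h := hhsm.measurable.mono hm le_rfl
  have hh0 : ∀ ω, 0 ≤ h ω := fun ω => mul_nonneg (hf0 ω) (Real.exp_pos _).le
  have hhbd : ∀ᵐ ω ∂P, ‖h ω‖ ≤ max C 0 := by
    filter_upwards [hfC, hE0] with ω h1 h2
    rw [Real.norm_eq_abs, abs_of_nonneg (hh0 ω)]
    simp only [Pi.zero_apply] at h2
    have hexp1 : Real.exp (-(l ^ β * E ω)) ≤ 1 :=
      Real.exp_le_one_iff.2 (neg_nonpos.2 (mul_nonneg hlβ h2))
    calc h ω ≤ f ω * 1 := mul_le_mul_of_nonneg_left hexp1 (hf0 ω)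
      _ = f ω := mul_one _
      _ ≤ max C 0 := le_trans h1 (le_max_left _ _)
  have hhVint : Integrable (h * V) P := by
    refine Integrable.bdd_mul hVint hhm0.aestronglyMeasurable hhbd
  have heq0 : (fun ω => f ω * Real.exp (l * ξ ω - l ^ β * (max (ξ ω) 0) ^ β - l ^ β * E ω))
      = h * V := by
    funext ω
    show f ω * _ = f ω * Real.exp (-(l ^ β * E ω)) * V ω
    rw [mul_assoc, ← Real.exp_add]
    congr 2
    ring
  rw [heq0]
  have step1 : ∫ ω, (h * V) ω ∂P = ∫ ω, (h * P[V|m]) ω ∂P := by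
    rw [← integral_condExp hm]
    exact integral_congr_ae (condExp_mul_of_stronglyMeasurable_left hhsm hhVint hVint)
  have hI1 : Integrable (h * P[V|m]) P := by
    refine Integrable.bdd_mul integrable_condExp hhm0.aestronglyMeasurable hhbd
  have hI2 : Integrable (fun ω => h ω * (1 + l ^ β * E ω)) P := by
    refine Integrable.bdd_mul (Integrable.add (integrable_const 1)
      (hEint.const_mul (l ^ β))) hhm0.aestronglyMeasurable hhbd
  have step2 : ∫ ω, (h * P[V|m]) ω ∂P ≤ ∫ ω, h ω * (1 + l ^ β * E ω) ∂P := by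
    apply integral_mono_ae hI1 hI2
    filter_upwards [hcond] with ω h1
    exact mul_le_mul_of_nonneg_left h1 (hh0 ω)
  have step3 : ∫ ω, h ω * (1 + l ^ β * E ω) ∂P ≤ ∫ ω, f ω ∂P := by
    apply integral_mono_ae hI2 hfint
    filter_upwards with ω
    show f ω * Real.exp (-(l ^ β * E ω)) * (1 + l ^ β * E ω) ≤ f ω
    set u := l ^ β * E ω
    have h1 : 1 + u ≤ Real.exp u := by have := Real.add_one_le_exp u; linarith
    have h2 : Real.exp (-u) * (1 + u) ≤ 1 := by
      rw [Real.exp_neg]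
      rcases le_total (1 + u) 0 with hc | hc
      · exact le_trans (mul_nonpos_of_nonneg_of_nonpos (by positivity) hc) zero_le_one
      · calc (Real.exp u)⁻¹ * (1 + u) ≤ (Real.exp u)⁻¹ * Real.exp u :=
            mul_le_mul_of_nonneg_left h1 (by positivity)
          _ = 1 := inv_mul_cancel₀ (Real.exp_pos u).ne'
    calc f ω * Real.exp (-u) * (1 + u) = f ω * (Real.exp (-u) * (1 + u)) := by ring
      _ ≤ f ω * 1 := mul_le_mul_of_nonneg_left h2 (hf0 ω)
      _ = f ω := mul_one _
  calc ∫ ω, (h * V) ω ∂P = ∫ ω, (h * P[V|m]) ω ∂P := step1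
    _ ≤ ∫ ω, h ω * (1 + l ^ β * E ω) ∂P := step2
    _ ≤ ∫ ω, f ω ∂P := step3


lemma aux_arith {β x v : ℝ} (hβ1 : 1 < β) (hx : 0 < x) (hv : 0 < v) :
    ((x / (β * v ^ β)) ^ ((1:ℝ) / (β - 1))) ^ β * v ^ β
      - ((x / (β * v ^ β)) ^ ((1:ℝ) / (β - 1))) * x
    = -(β ^ ((1 : ℝ) / (1 - β)) * (1 - β⁻¹)) * (x / v) ^ (β / (β - 1)) := by
  have hβ0 : (0:ℝ) < β := by linarith
  have hβ1' : β - 1 ≠ 0 := sub_ne_zero.2 (by linarith)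
  have hvβ : (0:ℝ) < v ^ β := Real.rpow_pos_of_pos hv β
  set c : ℝ := x / (β * v ^ β) with hc_def
  have hc : 0 < c := div_pos hx (mul_pos hβ0 hvβ)
  set l : ℝ := c ^ ((1:ℝ) / (β - 1)) with hl_def
  have hl : 0 < l := Real.rpow_pos_of_pos hc _
  have h1 : l ^ (β - 1) = c := by
    rw [hl_def, ← Real.rpow_mul hc.le, one_div, inv_mul_cancel₀ hβ1', Real.rpow_one]
  have h2 : l ^ β = l * c := by
    have : β = 1 + (β - 1) := by ring
    rw [this, Real.rpow_add hl, Real.rpow_one, h1]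
  have h3 : c * v ^ β = x / β := by
    rw [hc_def]; field_simp
  have h4 : l ^ β * v ^ β = l * x / β := by
    rw [h2, mul_assoc, h3]; ring
  -- key : l * x = β ^ (1/(1-β)) * (x/v) ^ (β/(β-1))
  have hkey : l * x = β ^ ((1:ℝ) / (1 - β)) * (x / v) ^ (β / (β - 1)) := by
    have hpos1 : 0 < l * x := mul_pos hl hx
    have hpos2 : 0 < β ^ ((1:ℝ) / (1 - β)) * (x / v) ^ (β / (β - 1)) :=
      mul_pos (Real.rpow_pos_of_pos hβ0 _) (Real.rpow_pos_of_pos (div_pos hx hv) _)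
    have hlog : Real.log (l * x)
        = Real.log (β ^ ((1:ℝ) / (1 - β)) * (x / v) ^ (β / (β - 1))) := by
      rw [Real.log_mul hl.ne' hx.ne', Real.log_mul
        (Real.rpow_pos_of_pos hβ0 _).ne' (Real.rpow_pos_of_pos (div_pos hx hv) _).ne',
        Real.log_rpow hβ0, Real.log_rpow (div_pos hx hv),
        hl_def, Real.log_rpow hc, hc_def,
        Real.log_div hx.ne' (mul_pos hβ0 hvβ).ne',
        Real.log_mul hβ0.ne' hvβ.ne', Real.log_rpow hv,
        Real.log_div hx.ne' hv.ne']
      have h1β : (1:ℝ) - β ≠ 0 := by intro h; apply hβ1'; linarith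
      field_simp
      ring
    exact Real.log_injOn_pos (Set.mem_Ioi.2 hpos1) (Set.mem_Ioi.2 hpos2) hlog
  rw [h4, hkey]
  field_simp
  ring

theorem martingale_exponential_inequality
    {Ω : Type*} [MeasurableSpace Ω] (P : Measure Ω) [IsProbabilityMeasure P]
    (n : ℕ) (X : ℕ → Ω → ℝ) (ℱ : ℕ → MeasurableSpace Ω) (β : ℝ)
    (hβ : β ∈ Set.Ioc (1 : ℝ) 2)
    (hmono : ∀ i j, i ≤ j → ℱ i ≤ ℱ j)
    (hle : ∀ i, ℱ i ≤ ‹MeasurableSpace Ω›)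
    (hadapt : ∀ i ∈ Finset.Icc 1 n, Measurable[ℱ i] (X i))
    (hint : ∀ i ∈ Finset.Icc 1 n, Integrable (X i) P)
    (hmd : ∀ i ∈ Finset.Icc 1 n, P[X i|ℱ (i - 1)] =ᵐ[P] 0)
    (hmom : ∀ i ∈ Finset.Icc 1 n, Integrable (fun ω => |X i ω| ^ β) P)
    (x v : ℝ) (hx : 0 < x) (hv : 0 < v) :
    P {ω | ∃ k ∈ Finset.Icc 1 n,
        x ≤ ∑ i ∈ Finset.Icc 1 k, X i ω ∧
        (∑ i ∈ Finset.Icc 1 k,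
          ((P[fun ω' => (max (-(X i ω')) 0) ^ β|ℱ (i - 1)]) ω +
            (max (X i ω) 0) ^ β)) ≤ v ^ β} ≤
      ENNReal.ofReal
        (Real.exp (-(β ^ ((1 : ℝ) / (1 - β)) * (1 - β⁻¹)) * (x / v) ^ (β / (β - 1)))) := by
  obtain ⟨hβ1, hβ2⟩ := hβ
  have hβ1' : (1:ℝ) ≤ β := hβ1.le
  have hβ0 : (0:ℝ) < β := by linarith
  have hvβ : (0:ℝ) < v ^ β := Real.rpow_pos_of_pos hv β
  set l : ℝ := (x / (β * v ^ β)) ^ ((1:ℝ) / (β - 1)) with hl_def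
  have hl0 : 0 < l := Real.rpow_pos_of_pos (div_pos hx (mul_pos hβ0 hvβ)) _
  have hlβ0 : 0 < l ^ β := Real.rpow_pos_of_pos hl0 β
  set E : ℕ → Ω → ℝ := fun i => P[fun ω' => (max (-(X i ω')) 0) ^ β|ℱ (i-1)] with hE_def
  set S : ℕ → Ω → ℝ := fun k ω => ∑ i ∈ Finset.Icc 1 k, X i ω with hS_def
  set G : ℕ → Ω → ℝ :=
    fun k ω => ∑ i ∈ Finset.Icc 1 k, (E i ω + (max (X i ω) 0) ^ β) with hG_def
  set Z : ℕ → Ω → ℝ := fun k ω => Real.exp (l * S k ω - l ^ β * G k ω) with hZ_def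
  set succSet : ℕ → Set Ω := fun k => {ω | x ≤ S k ω ∧ G k ω ≤ v ^ β} with hsucc_def
  set B : ℕ → Set Ω := fun k => {ω | ∀ j, 1 ≤ j → j ≤ k → ω ∉ succSet j} with hB_def
  set A : ℕ → Set Ω := fun k => B (k-1) ∩ succSet k with hA_def
  -- basic measurability
  have hXm : ∀ i, i ∈ Finset.Icc 1 n → Measurable (X i) :=
    fun i hi => ((hadapt i hi).mono (hle i) le_rfl)
  have hSm : ∀ k, k ≤ n → Measurable[ℱ k] (S k) := by
    intro k hk
    apply Finset.measurable_sum
    intro i hi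
    obtain ⟨hi1, hi2⟩ := Finset.mem_Icc.1 hi
    exact (hadapt i (Finset.mem_Icc.2 ⟨hi1, le_trans hi2 hk⟩)).mono (hmono i k hi2) le_rfl
  have hGm : ∀ k, k ≤ n → Measurable[ℱ k] (G k) := by
    intro k hk
    apply Finset.measurable_sum
    intro i hi
    obtain ⟨hi1, hi2⟩ := Finset.mem_Icc.1 hi
    have hXi : Measurable[ℱ k] (X i) :=
      (hadapt i (Finset.mem_Icc.2 ⟨hi1, le_trans hi2 hk⟩)).mono (hmono i k hi2) le_rfl
    have hEi : Measurable[ℱ k] (E i) :=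
      (stronglyMeasurable_condExp (m := ℱ (i-1))).measurable.mono
        (hmono (i-1) k (by omega)) le_rfl
    exact hEi.add ((measurable_rpow_const β).comp (hXi.max measurable_const))
  have hZm : ∀ k, k ≤ n → Measurable[ℱ k] (Z k) := by
    intro k hk
    exact Real.measurable_exp.comp (((hSm k hk).const_mul l).sub ((hGm k hk).const_mul (l ^ β)))
  have hsuccm : ∀ k, k ≤ n → MeasurableSet[ℱ k] (succSet k) := by
    intro k hk
    exact (measurableSet_le measurable_const (hSm k hk)).inter
      (measurableSet_le (hGm k hk) measurable_const)
  have hBeq : ∀ k, B k = ⋂ j ∈ Finset.Icc 1 k, (succSet j)ᶜ := by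
    intro k
    ext ω
    simp only [hB_def, Set.mem_setOf_eq, Set.mem_iInter, Set.mem_compl_iff, Finset.mem_Icc]
    constructor
    · intro h j hj; exact h j hj.1 hj.2
    · intro h j hj1 hj2; exact h j ⟨hj1, hj2⟩
  have hBm : ∀ k, k ≤ n → MeasurableSet[ℱ k] (B k) := by
    intro k hk
    rw [hBeq k]
    apply Finset.measurableSet_biInter
    intro j hj
    obtain ⟨hj1, hj2⟩ := Finset.mem_Icc.1 hj
    exact (hmono j k hj2 _ (hsuccm j (le_trans hj2 hk))).compl
  have hAm : ∀ k, 1 ≤ k → k ≤ n → MeasurableSet (A k) := by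
    intro k h1 h2
    exact (hle (k-1) _ (hBm (k-1) (by omega))).inter (hle k _ (hsuccm k h2))
  have hZpos : ∀ k ω, 0 < Z k ω := fun k ω => Real.exp_pos _
  -- a.e. nonnegativity of E
  have hE0ae : ∀ᵐ ω ∂P, ∀ i : ℕ, 0 ≤ E i ω :=
    MeasureTheory.ae_all_iff.2 fun i => condExp_nonneg (Filter.Eventually.of_forall fun ω =>
      Real.rpow_nonneg (le_max_right _ _) β)
  -- a.e. bound on Z
  have hZbd : ∀ k, k ≤ n → ∀ᵐ ω ∂P, Z k ω ≤ Real.exp (k : ℝ) := by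
    intro k hk
    filter_upwards [hE0ae] with ω hω
    apply Real.exp_le_exp.2
    have expand : l * S k ω - l ^ β * G k ω
        = ∑ i ∈ Finset.Icc 1 k,
            (l * X i ω - l ^ β * (max (X i ω) 0) ^ β - l ^ β * E i ω) := by
      rw [hS_def, hG_def]
      simp only [Finset.mul_sum]
      rw [← Finset.sum_sub_distrib]
      apply Finset.sum_congr rfl
      intro i _
      ring
    rw [expand]
    calc ∑ i ∈ Finset.Icc 1 k, (l * X i ω - l ^ β * (max (X i ω) 0) ^ β - l ^ β * E i ω)
        ≤ ∑ _i ∈ Finset.Icc 1 k, (1:ℝ) := by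
          apply Finset.sum_le_sum
          intro i hi
          obtain ⟨hi1, hi2⟩ := Finset.mem_Icc.1 hi
          have hEi : 0 ≤ E i ω := hω i
          have h1 : l * X i ω ≤ l * max (X i ω) 0 :=
            mul_le_mul_of_nonneg_left (le_max_left _ _) hl0.le
          have h2 : l ^ β * (max (X i ω) 0) ^ β = (l * max (X i ω) 0) ^ β :=
            (Real.mul_rpow hl0.le (le_max_right _ _)).symm
          have h3 := auxD hβ1' (mul_nonneg hl0.le (le_max_right (X i ω) 0))
          have h4 : 0 ≤ l ^ β * E i ω := mul_nonneg hlβ0.le hEi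
          rw [h2]
          linarith
      _ = (k : ℝ) := by
          rw [Finset.sum_const, Nat.card_Icc]
          simp
  have hZint : ∀ k, k ≤ n → Integrable (Z k) P := by
    intro k hk
    refine Integrable.mono' (integrable_const (Real.exp (k:ℝ)))
      (((hZm k hk).mono (hle k) le_rfl).aestronglyMeasurable) ?_
    filter_upwards [hZbd k hk] with ω h1
    rw [Real.norm_eq_abs, abs_of_nonneg (hZpos k ω).le]
    exact h1
  have hAind_int : ∀ j, 1 ≤ j → j ≤ n → Integrable ((A j).indicator (Z j)) P :=
    fun j h1 h2 => (hZint j h2).indicator (hAm j h1 h2)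
  have hBind_int : ∀ k, k ≤ n → Integrable ((B k).indicator (Z k)) P :=
    fun k hk => (hZint k hk).indicator (hle k _ (hBm k hk))
  have hWint : ∀ k, k ≤ n →
      Integrable (fun ω => ∑ j ∈ Finset.Icc 1 k, (A j).indicator (Z j) ω) P := by
    intro k hk
    apply integrable_finset_sum
    intro j hj
    obtain ⟨hj1, hj2⟩ := Finset.mem_Icc.1 hj
    exact hAind_int j hj1 (le_trans hj2 hk)
  -- the induction
  have hInd : ∀ k, k ≤ n →
      (∫ ω, ((∑ j ∈ Finset.Icc 1 k, (A j).indicator (Z j) ω)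
        + (B k).indicator (Z k) ω) ∂P) ≤ 1 := by
    intro k
    induction k with
    | zero =>
      intro _
      have h0 : ∀ ω : Ω, ((∑ j ∈ Finset.Icc 1 0, (A j).indicator (Z j) ω)
          + (B 0).indicator (Z 0) ω) = 1 := by
        intro ω
        have he : Finset.Icc 1 0 = (∅ : Finset ℕ) := by decide
        have hB0 : ω ∈ B 0 := by
          intro j hj1 hj2
          omega
        rw [he, Finset.sum_empty, Set.indicator_of_mem hB0, zero_add, hZ_def]
        simp [hS_def, hG_def, he]
      rw [integral_congr_ae (Filter.Eventually.of_forall h0)]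
      simp
    | succ k ih =>
      intro hk1
      have hkn : k ≤ n := by omega
      have ih' := ih hkn
      -- merge identity
      have hmerge : ∀ ω, (A (k+1)).indicator (Z (k+1)) ω + (B (k+1)).indicator (Z (k+1)) ω
          = (B k).indicator (Z (k+1)) ω := by
        intro ω
        by_cases hB : ω ∈ B k
        · by_cases hs : ω ∈ succSet (k+1)
          · have hA1 : ω ∈ A (k+1) := ⟨hB, hs⟩
            have hB1 : ω ∉ B (k+1) := by
              intro hmem
              exact (hmem (k+1) (by omega) le_rfl) hs
            rw [Set.indicator_of_mem hA1, Set.indicator_of_notMem hB1,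
              Set.indicator_of_mem hB]
            ring
          · have hA1 : ω ∉ A (k+1) := fun hmem => hs hmem.2
            have hB1 : ω ∈ B (k+1) := by
              intro j hj1 hj2
              rcases Nat.lt_or_ge j (k+1) with h | h
              · exact hB j hj1 (by omega)
              · have : j = k + 1 := by omega
                rw [this]; exact hs
            rw [Set.indicator_of_notMem hA1, Set.indicator_of_mem hB1,
              Set.indicator_of_mem hB]
            ring
        · have hA1 : ω ∉ A (k+1) := fun hmem => hB hmem.1
          have hB1 : ω ∉ B (k+1) := by
            intro hmem
            apply hB
            intro j hj1 hj2
            exact hmem j hj1 (by omega)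
          rw [Set.indicator_of_notMem hA1, Set.indicator_of_notMem hB1,
            Set.indicator_of_notMem hB]
          ring
      -- key step
      have hstep : (∫ ω, (B k).indicator (Z (k+1)) ω ∂P)
          ≤ ∫ ω, (B k).indicator (Z k) ω ∂P := by
        have hrw : ∀ ω, (B k).indicator (Z (k+1)) ω
            = (B k).indicator (Z k) ω * Real.exp (l * X (k+1) ω
                - l ^ β * (max (X (k+1) ω) 0) ^ β
                - l ^ β * (P[fun ω' => (max (-(X (k+1) ω')) 0) ^ β|ℱ k]) ω) := by
          intro ω
          by_cases hB : ω ∈ B k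
          · rw [Set.indicator_of_mem hB, Set.indicator_of_mem hB]
            have hSsucc : S (k+1) ω = S k ω + X (k+1) ω := by
              rw [hS_def]
              exact Finset.sum_Icc_succ_top (by omega) _
            have hGsucc : G (k+1) ω = G k ω + (E (k+1) ω + (max (X (k+1) ω) 0) ^ β) := by
              rw [hG_def]
              exact Finset.sum_Icc_succ_top (by omega) _
            have hEeq : (P[fun ω' => (max (-(X (k+1) ω')) 0) ^ β|ℱ k]) ω = E (k+1) ω := rfl
            rw [hZ_def]
            simp only []
            rw [hSsucc, hGsucc, hEeq, ← Real.exp_add]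
            congr 1
            ring
          · rw [Set.indicator_of_notMem hB, Set.indicator_of_notMem hB, zero_mul]
        rw [integral_congr_ae (Filter.Eventually.of_forall hrw)]
        have hmem : k + 1 ∈ Finset.Icc 1 n := Finset.mem_Icc.2 ⟨by omega, hk1⟩
        have hmd' : P[X (k+1)|ℱ k] =ᵐ[P] 0 := hmd (k+1) hmem
        apply key_step P (hle k) hβ1' hβ2 hl0.le (hXm (k+1) hmem) (hint (k+1) hmem)
          hmd' (hmom (k+1) hmem) ((hZm k hkn).indicator (hBm k hkn))
          (fun ω => Set.indicator_nonneg (fun ω' _ => (hZpos k ω').le) ω)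
          (C := Real.exp (k:ℝ))
        filter_upwards [hZbd k hkn] with ω h1
        by_cases hω : ω ∈ B k
        · rw [Set.indicator_of_mem hω]; exact h1
        · rw [Set.indicator_of_notMem hω]; positivity
      -- assemble
      calc (∫ ω, ((∑ j ∈ Finset.Icc 1 (k+1), (A j).indicator (Z j) ω)
            + (B (k+1)).indicator (Z (k+1)) ω) ∂P)
          = ∫ ω, ((∑ j ∈ Finset.Icc 1 k, (A j).indicator (Z j) ω)
            + (B k).indicator (Z (k+1)) ω) ∂P := by
            apply integral_congr_ae
            apply Filter.Eventually.of_forall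
            intro ω
            dsimp only
            rw [Finset.sum_Icc_succ_top (by omega : 1 ≤ k + 1)]
            rw [add_assoc, hmerge ω]
        _ = (∫ ω, (∑ j ∈ Finset.Icc 1 k, (A j).indicator (Z j) ω) ∂P)
            + ∫ ω, (B k).indicator (Z (k+1)) ω ∂P := by
            apply integral_add (hWint k hkn)
            exact (hZint (k+1) hk1).indicator (hle k _ (hBm k hkn))
        _ ≤ (∫ ω, (∑ j ∈ Finset.Icc 1 k, (A j).indicator (Z j) ω) ∂P)
            + ∫ ω, (B k).indicator (Z k) ω ∂P := by
            exact add_le_add le_rfl hstep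
        _ = ∫ ω, ((∑ j ∈ Finset.Icc 1 k, (A j).indicator (Z j) ω)
            + (B k).indicator (Z k) ω) ∂P := by
            rw [← integral_add (hWint k hkn) (hBind_int k hkn)]
        _ ≤ 1 := ih'
  -- final assembly
  set Event : Set Ω := {ω | ∃ k ∈ Finset.Icc 1 n, x ≤ S k ω ∧ G k ω ≤ v ^ β} with hEvent_def
  have hgoal_eq : {ω | ∃ k ∈ Finset.Icc 1 n,
      x ≤ ∑ i ∈ Finset.Icc 1 k, X i ω ∧
      (∑ i ∈ Finset.Icc 1 k,
        ((P[fun ω' => (max (-(X i ω')) 0) ^ β|ℱ (i - 1)]) ω +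
          (max (X i ω) 0) ^ β)) ≤ v ^ β} = Event := rfl
  have hEventm : MeasurableSet Event := by
    have : Event = ⋃ k ∈ Finset.Icc 1 n, succSet k := by
      ext ω
      simp [hEvent_def, hsucc_def]
      tauto
    rw [this]
    apply Finset.measurableSet_biUnion
    intro k hk
    exact hle k _ (hsuccm k (Finset.mem_Icc.1 hk).2)
  set r : ℝ := Real.exp (l * x - l ^ β * v ^ β) with hr_def
  have hr0 : 0 < r := Real.exp_pos _
  have hptwise : ∀ ω, Event.indicator (fun _ => r) ω
      ≤ (∑ j ∈ Finset.Icc 1 n, (A j).indicator (Z j) ω) + (B n).indicator (Z n) ω := by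
    intro ω
    have hnn : 0 ≤ (∑ j ∈ Finset.Icc 1 n, (A j).indicator (Z j) ω)
        + (B n).indicator (Z n) ω := by
      apply add_nonneg
      · apply Finset.sum_nonneg
        intro j _
        exact Set.indicator_nonneg (fun ω' _ => (hZpos j ω').le) ω
      · exact Set.indicator_nonneg (fun ω' _ => (hZpos n ω').le) ω
    by_cases hω : ω ∈ Event
    · rw [Set.indicator_of_mem hω]
      obtain ⟨k₁, hk₁, hsucc₁⟩ := hω
      have hex : ∃ k, 1 ≤ k ∧ k ≤ n ∧ ω ∈ succSet k :=
        ⟨k₁, (Finset.mem_Icc.1 hk₁).1, (Finset.mem_Icc.1 hk₁).2, hsucc₁⟩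
      classical
      set k₀ := Nat.find hex with hk₀_def
      obtain ⟨hk₀1, hk₀n, hk₀s⟩ := Nat.find_spec hex
      have hA0 : ω ∈ A k₀ := by
        constructor
        · intro j hj1 hj2 hjs
          have hlt : j < k₀ := by omega
          exact Nat.find_min hex hlt ⟨hj1, by omega, hjs⟩
        · exact hk₀s
      have hrZ : r ≤ Z k₀ ω := by
        rw [hr_def, hZ_def]
        apply Real.exp_le_exp.2
        have h1 : l * x ≤ l * S k₀ ω := mul_le_mul_of_nonneg_left hk₀s.1 hl0.le
        have h2 : l ^ β * G k₀ ω ≤ l ^ β * v ^ β :=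
          mul_le_mul_of_nonneg_left hk₀s.2 hlβ0.le
        linarith
      calc r ≤ Z k₀ ω := hrZ
        _ = (A k₀).indicator (Z k₀) ω := (Set.indicator_of_mem hA0 _).symm
        _ ≤ ∑ j ∈ Finset.Icc 1 n, (A j).indicator (Z j) ω := by
            apply Finset.single_le_sum
              (f := fun j => (A j).indicator (Z j) ω)
              (fun j _ => Set.indicator_nonneg (fun ω' _ => (hZpos j ω').le) ω)
              (Finset.mem_Icc.2 ⟨hk₀1, hk₀n⟩)
        _ ≤ _ := le_add_of_nonneg_right
            (Set.indicator_nonneg (fun ω' _ => (hZpos n ω').le) ω)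
    · rw [Set.indicator_of_notMem hω]
      exact hnn
  have hIr : (∫ ω, Event.indicator (fun _ => r) ω ∂P) = (P Event).toReal * r := by
    rw [integral_indicator_const r hEventm, smul_eq_mul]; rfl
  have hfinal : (P Event).toReal * r ≤ 1 := by
    rw [← hIr]
    calc (∫ ω, Event.indicator (fun _ => r) ω ∂P)
        ≤ ∫ ω, ((∑ j ∈ Finset.Icc 1 n, (A j).indicator (Z j) ω)
            + (B n).indicator (Z n) ω) ∂P := by
          apply integral_mono_ae ((integrable_const r).indicator hEventm)
            ((hWint n le_rfl).add (hBind_int n le_rfl))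
          exact Filter.Eventually.of_forall hptwise
      _ ≤ 1 := hInd n le_rfl
  have htoReal : (P Event).toReal ≤ Real.exp (l ^ β * v ^ β - l * x) := by
    have h1 : (P Event).toReal ≤ r⁻¹ := by
      rw [← one_div]
      rw [le_div_iff₀ hr0]
      exact hfinal
    have h2 : r⁻¹ = Real.exp (l ^ β * v ^ β - l * x) := by
      rw [hr_def, ← Real.exp_neg]
      congr 1
      ring
    rwa [h2] at h1
  rw [ENNReal.le_ofReal_iff_toReal_le (measure_ne_top P _) (Real.exp_nonneg _)]
  have harith := aux_arith hβ1 hx hv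
  rw [← hl_def] at harith
  rw [← harith]
  exact htoReal

end
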